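/- Let A > 0, B > 0, ν > 0, and c > 0 be real numbers. For n ∈ ℕ and complex z, set f_n(z) = ((−1)^n B^n/(n! Γ(1+ν+n))) Γ(z+ν+n) Γ(z) A^z, where A^z = exp(z log A) and Γ is the complex Gamma function. Then for each y ∈ ℝ the series ∑_{n=0}^∞ f_n(c+iy) converges, the function y ↦ ∑_{n=0}^∞ f_n(c+iy) is integrable on ℝ, each function y ↦ f_n(c+iy) is integrable on ℝ, the series ∑_{n=0}^∞ ∫_ℝ f_n(c+iy) dy converges, and ∫_ℝ (∑_{n=0}^∞ f_n(c+iy)) dy = ∑_{n=0}^∞ (∫_ℝ f_n(c+iy) dy). -/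

import Mathlib

open Filter Topology MeasureTheory

/-- Pochhammer symbol `(a)_k = a(a+1)⋯(a+k-1)`. -/
noncomputable def poch (a : ℂ) (k : ℕ) : ℂ := ∏ i ∈ Finset.range k, (a + i)

/-- Modified Bessel function of the first kind of complex order `t`, real argument `z > 0`,
defined by its series, with `1/Γ = 0` at the poles of `Γ`. -/
noncomputable def besselI (t : ℂ) (z : ℝ) : ℂ :=
  ∑' m : ℕ, (1 / ((m.factorial : ℂ) * Complex.Gamma (t + m + 1))) *
    ((z / 2 : ℝ) : ℂ) ^ (2 * (m : ℂ) + t)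

/-- Modified Bessel function of the second kind of complex order `κ` (with `Re κ > -1/2`),
real argument `z > 0`. -/
noncomputable def besselK (κ : ℂ) (z : ℝ) : ℂ :=
  Complex.Gamma (κ + 1 / 2) * ((2 * z : ℝ) : ℂ) ^ κ / (Real.sqrt Real.pi : ℂ) *
    ∫ t in Set.Ioi (0 : ℝ), (Real.cos t : ℂ) * (((t ^ 2 + z ^ 2 : ℝ) : ℂ)) ^ (-κ - 1 / 2)

/-- Bessel function of the first kind of real order `ρ`, argument `z > 0`. -/
noncomputable def besselJ (ρ : ℝ) (z : ℝ) : ℝ :=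
  ∑' m : ℕ, ((-1 : ℝ) ^ m / (m.factorial * Real.Gamma ((m : ℝ) + 1 + ρ))) *
    (z / 2) ^ (2 * (m : ℝ) + ρ)

/-- The function `P_n(x)`. -/
noncomputable def Pfun (ν : ℕ) (μ : ℝ) (n : ℕ) (x : ℝ) : ℂ :=
  (-1 : ℂ) ^ n * (((ν + n).factorial : ℂ) * (n.factorial : ℂ) / (ν.factorial : ℂ)) *
    (Real.sqrt μ : ℂ)⁻¹ *
    ∑ k ∈ Finset.range (n + 1),
      ((2 * Real.sqrt x / (1 - μ) : ℝ) : ℂ) ^ k *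
        (poch (-(n : ℂ)) k / (poch ((ν : ℂ) + 1) k * (k.factorial : ℂ))) *
        besselI (k : ℂ) ((1 - μ) * Real.sqrt x / μ)

/-- The function `Q_n(y)`. -/
noncomputable def Qfun (ν : ℕ) (μ : ℝ) (n : ℕ) (y : ℝ) : ℂ :=
  (-1 : ℂ) ^ n * (2 / ((n.factorial : ℂ) ^ 2 * (ν.factorial : ℂ))) * (Real.sqrt μ : ℂ)⁻¹ *
    ∑ l ∈ Finset.range (n + 1),
      ((2 * Real.sqrt y / (1 + μ) : ℝ) : ℂ) ^ (l + ν) *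
        (poch (-(n : ℂ)) l / (poch ((ν : ℂ) + 1) l * (l.factorial : ℂ))) *
        besselK ((l : ℂ) + ν) ((1 + μ) * Real.sqrt y / μ)

/-- The correlation kernel `K_N(x,y;μ) = ∑_{n=0}^{N-1} P_n(x) Q_n(y)`. -/
noncomputable def Kker (ν N : ℕ) (μ x y : ℝ) : ℂ :=
  ∑ n ∈ Finset.range N, Pfun ν μ n x * Qfun ν μ n y

/-- The Bessel kernel in square-root variables, for `x ≠ y`. -/
noncomputable def SBessel (ν : ℕ) (x y : ℝ) : ℝ :=
  -(y / x) ^ ((ν : ℝ) / 2) *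
    (2 * Real.sqrt x * besselJ ((ν : ℝ) - 1) (2 * Real.sqrt x) * besselJ (ν : ℝ) (2 * Real.sqrt y) -
      2 * Real.sqrt y * besselJ ((ν : ℝ) - 1) (2 * Real.sqrt y) * besselJ (ν : ℝ) (2 * Real.sqrt x)) /
    ((x - y) * Real.sqrt x * Real.sqrt y)

/-- The polynomial `𝒫(s,t,ν)`. -/
noncomputable def Ppoly (s t : ℂ) (ν : ℕ) : ℂ :=
  (1 / 4) * (t - s) * (t ^ 2 + s ^ 2 + (t + s) * ((ν : ℂ) - 1) - (ν : ℂ))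

/-- The interpolating kernel `𝕊(x,y;g)` (residue-series form), for `x ≠ y`. -/
noncomputable def Sker (ν : ℕ) (g x y : ℝ) : ℂ :=
  (4 / (((x ^ 2 - y ^ 2 : ℝ) : ℂ) * (g : ℂ))) *
    ∑' k : ℕ, ∑' l : ℕ,
      ((-1 : ℂ) ^ (k + l) / ((k.factorial : ℂ) * (l.factorial : ℂ))) *
        ((x : ℂ) ^ k * (y : ℂ) ^ (l + ν) /
          (Complex.Gamma ((k : ℂ) + ν + 1) * Complex.Gamma ((l : ℂ) + ν + 1))) *
        (Ppoly (l : ℂ) (k : ℂ) ν -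
          (g : ℂ) * ((l : ℂ) ^ 2 + (k : ℂ) ^ 2 + (ν : ℂ) * l - (l : ℂ) * k)) *
        besselI (k : ℂ) (x / (2 * g)) * besselK ((l : ℂ) + ν) (y / (2 * g))

/-- The diagonal value `𝕊(x,x;g)` of the interpolating kernel. -/
noncomputable def SkerDiag (ν : ℕ) (g x : ℝ) : ℂ :=
  (1 / ((g : ℂ) ^ 2 * (x : ℂ))) *
    ∑' k : ℕ, ∑' l : ℕ,
      ((-1 : ℂ) ^ (k + l) / ((k.factorial : ℂ) * (l.factorial : ℂ))) *
        ((x : ℂ) ^ (k + l + ν) /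
          (Complex.Gamma ((k : ℂ) + ν + 1) * Complex.Gamma ((l : ℂ) + ν + 1))) *
        (Ppoly (l : ℂ) (k : ℂ) ν -
          (g : ℂ) * ((l : ℂ) ^ 2 + (k : ℂ) ^ 2 + (ν : ℂ) * l - (l : ℂ) * k)) *
        besselI ((k : ℂ) - 1) (x / (2 * g)) * besselK ((l : ℂ) + ν) (x / (2 * g))

/-- The generalized Laguerre polynomial `L_n^{(ν)}(x)`. -/
noncomputable def laguerreL (ν n : ℕ) (x : ℝ) : ℝ :=
  ∑ k ∈ Finset.range (n + 1),
    (-1 : ℝ) ^ k * Real.Gamma ((n : ℝ) + ν + 1) /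
      ((n - k).factorial * Real.Gamma ((ν : ℝ) + k + 1) * k.factorial) * x ^ k

/-- The function `A_N(s,t;μ)` from the Christoffel–Darboux analysis. -/
noncomputable def Afun (ν N : ℕ) (s t : ℂ) (μ : ℝ) : ℂ :=
  -(((1 + μ : ℝ) : ℂ) ^ 2 / 4) * (t - (N : ℂ)) * (t - (N : ℂ) + 1)
  - (((1 + μ : ℝ) : ℂ) ^ 2 / 4) * ((ν : ℂ) + (N : ℂ) + 1) * ((N : ℂ) + 1) *
      (t - (N : ℂ)) / (s - (N : ℂ) - 1)
  - (μ : ℂ) * (3 * (N : ℂ) + (ν : ℂ)) * (t - (N : ℂ))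
  - (((1 - μ : ℝ) : ℂ) ^ 2 / 2) * (2 * (N : ℂ) + (ν : ℂ)) * (t - (N : ℂ))
  + (μ : ℂ) * (N : ℂ) * (s - (N : ℂ))
  + (((1 - μ : ℝ) : ℂ) ^ 2 / 2) * (2 * (N : ℂ) + (ν : ℂ)) * (s - (N : ℂ))
  + (((1 - μ : ℝ) : ℂ) ^ 2 / 4) * (s - (N : ℂ)) * (s - (N : ℂ) + 1)
  + (((1 - μ : ℝ) : ℂ) ^ 2 / 4) * ((N : ℂ) + 1) * ((ν : ℂ) + (N : ℂ) + 1) *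
      (s - (N : ℂ)) / (t - (N : ℂ) - 1)

/-- Kummer's confluent hypergeometric function `Φ(a;b;z)`. -/
noncomputable def kummer (a b z : ℂ) : ℂ :=
  ∑' m : ℕ, poch a m / (poch b m * (m.factorial : ℂ)) * z ^ m

/-- Wright's generalized Bessel function `J_{a,b}(x)`. -/
noncomputable def wrightJ (a b x : ℝ) : ℝ :=
  ∑' j : ℕ, (-x) ^ j / (j.factorial * Real.Gamma (a + b * j))

/-- Borodin's hard edge kernel `K^{(α,θ)}(x,y)`. -/
noncomputable def borodinK (α θ x y : ℝ) : ℝ :=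
  θ * x ^ α * ∫ u in (0 : ℝ)..1,
    wrightJ ((α + 1) / θ) (1 / θ) (x * u) * wrightJ (α + 1) θ ((y * u) ^ θ) * u ^ α

/-- The function `f_n(z) = ((−1)^n Bⁿ/(n! Γ(1+ν+n))) Γ(z+ν+n) Γ(z) A^z`. -/
noncomputable def fB (A B ν : ℝ) (n : ℕ) (z : ℂ) : ℂ :=
  ((-1 : ℂ) ^ n * (B : ℂ) ^ n / ((n.factorial : ℂ) * Complex.Gamma (1 + (ν : ℂ) + n))) *
    Complex.Gamma (z + ν + n) * Complex.Gamma z * Complex.exp (z * (Real.log A : ℂ))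

section auxLemmas

/-- `|Γ(z)| ≤ Γ(Re z)` for `Re z > 0`. -/
lemma absGamma_le {z : ℂ} (hz : 0 < z.re) :
    ‖Complex.Gamma z‖ ≤ Real.Gamma z.re := by
  rw [Complex.Gamma_eq_integral hz, Real.Gamma_eq_integral hz, Complex.GammaIntegral]
  refine le_trans (norm_integral_le_integral_norm _) (le_of_eq ?_)
  refine MeasureTheory.setIntegral_congr_fun measurableSet_Ioi fun x hx => ?_
  rw [norm_mul, Complex.norm_real, Real.norm_eq_abs,
    abs_of_nonneg (Real.exp_pos _).le, Complex.norm_cpow_eq_rpow_re_of_pos hx]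
  simp

lemma absGamma_line {c : ℝ} (hc : 0 < c) (y : ℝ) :
    ‖Complex.Gamma ((c : ℂ) + y * Complex.I)‖ * (c * (1 + y ^ 2)) ≤
      Real.Gamma (c + 3) := by
  set z : ℂ := (c : ℂ) + y * Complex.I with hzdef
  have hre : z.re = c := by simp [hzdef]
  have him : z.im = y := by simp [hzdef]
  have h0 : z ≠ 0 := by
    intro h; rw [h, Complex.zero_re] at hre; exact hc.ne hre
  have h1 : z + 1 ≠ 0 := by
    intro h
    have : (z + 1).re = 0 := by rw [h]; simp
    rw [Complex.add_re, hre, Complex.one_re] at this; linarith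
  have h2 : z + 2 ≠ 0 := by
    intro h
    have : (z + 2).re = 0 := by rw [h]; simp
    rw [Complex.add_re, hre] at this; norm_num at this; linarith
  have key : Complex.Gamma (z + 3) = (z + 2) * ((z + 1) * (z * Complex.Gamma z)) := by
    rw [show z + 3 = (z + 2) + 1 from by ring, Complex.Gamma_add_one _ h2,
      show z + 2 = (z + 1) + 1 from by ring, Complex.Gamma_add_one _ h1,
      Complex.Gamma_add_one _ h0]
  have habs : ‖Complex.Gamma (z + 3)‖ =
      ‖z + 2‖ * (‖z + 1‖ * (‖z‖ * ‖Complex.Gamma z‖)) := by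
    rw [key, norm_mul, norm_mul, norm_mul]
  have habsz : c ≤ ‖z‖ := by rw [← hre]; exact Complex.re_le_norm z
  have hs1 : Real.sqrt (1 + y ^ 2) ≤ ‖z + 1‖ := by
    rw [Complex.norm_def, Complex.normSq_apply]
    apply Real.sqrt_le_sqrt
    rw [Complex.add_re, Complex.add_im, hre, him]
    simp only [Complex.one_re, Complex.one_im, add_zero]
    nlinarith
  have hs2 : Real.sqrt (1 + y ^ 2) ≤ ‖z + 2‖ := by
    rw [Complex.norm_def, Complex.normSq_apply]
    apply Real.sqrt_le_sqrt
    rw [Complex.add_re, Complex.add_im, hre, him]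
    norm_num
    nlinarith
  have hprod : (1 : ℝ) + y ^ 2 ≤ ‖z + 1‖ * ‖z + 2‖ := by
    calc (1 : ℝ) + y ^ 2 = Real.sqrt (1 + y ^ 2) * Real.sqrt (1 + y ^ 2) :=
          (Real.mul_self_sqrt (by positivity)).symm
      _ ≤ ‖z + 1‖ * ‖z + 2‖ := by
          apply mul_le_mul hs1 hs2 (Real.sqrt_nonneg _) (norm_nonneg _)
  have hre3 : (z + 3).re = c + 3 := by
    rw [Complex.add_re, hre]; norm_num
  have hfinal1 : c * (1 + y ^ 2) ≤
      ‖z‖ * (‖z + 1‖ * ‖z + 2‖) :=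
    mul_le_mul habsz hprod (by positivity) (norm_nonneg _)
  have hfinal2 : ‖Complex.Gamma (z + 3)‖ ≤ Real.Gamma (c + 3) := by
    have h := absGamma_le (z := z + 3) (by rw [hre3]; linarith)
    rwa [hre3] at h
  calc ‖Complex.Gamma z‖ * (c * (1 + y ^ 2))
      ≤ ‖Complex.Gamma z‖ *
        (‖z‖ * (‖z + 1‖ * ‖z + 2‖)) :=
        mul_le_mul_of_nonneg_left hfinal1 (norm_nonneg _)
    _ = ‖Complex.Gamma (z + 3)‖ := by rw [habs]; ring
    _ ≤ Real.Gamma (c + 3) := hfinal2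

/-- The majorant sequence. -/
noncomputable def Mb (A B ν c : ℝ) (n : ℕ) : ℝ :=
  B ^ n * Real.Gamma (c + ν + n) * (Real.Gamma (c + 3) * A ^ c / c) /
    (n.factorial * Real.Gamma (1 + ν + n))

lemma Mb_pos {A B ν c : ℝ} (hA : 0 < A) (hB : 0 < B) (hν : 0 < ν) (hc : 0 < c) (n : ℕ) :
    0 < Mb A B ν c n := by
  have h1 : (0 : ℝ) < Real.Gamma (c + ν + n) := Real.Gamma_pos_of_pos (by positivity)
  have h2 : (0 : ℝ) < Real.Gamma (c + 3) := Real.Gamma_pos_of_pos (by positivity)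
  have h3 : (0 : ℝ) < Real.Gamma (1 + ν + n) := Real.Gamma_pos_of_pos (by positivity)
  have h4 : (0 : ℝ) < (n.factorial : ℝ) := by positivity
  unfold Mb
  positivity

lemma Mb_succ {A B ν c : ℝ} (hA : 0 < A) (hB : 0 < B) (hν : 0 < ν) (hc : 0 < c) (n : ℕ) :
    Mb A B ν c (n + 1) = Mb A B ν c n * (B * (c + ν + n) / ((1 + ν + n) * (n + 1))) := by
  have e1 : Real.Gamma (c + ν + (n + 1 : ℕ)) = (c + ν + n) * Real.Gamma (c + ν + n) := by
    push_cast
    rw [show c + ν + ((n : ℝ) + 1) = (c + ν + n) + 1 by ring]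
    exact Real.Gamma_add_one (by positivity)
  have e2 : Real.Gamma (1 + ν + (n + 1 : ℕ)) = (1 + ν + n) * Real.Gamma (1 + ν + n) := by
    push_cast
    rw [show 1 + ν + ((n : ℝ) + 1) = (1 + ν + n) + 1 by ring]
    exact Real.Gamma_add_one (by positivity)
  have e3 : ((n + 1).factorial : ℝ) = (n + 1) * n.factorial := by
    rw [Nat.factorial_succ]; push_cast; ring
  have h3 : (0 : ℝ) < Real.Gamma (1 + ν + n) := Real.Gamma_pos_of_pos (by positivity)
  have h4 : (0 : ℝ) < (n.factorial : ℝ) := by positivity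
  have h5 : (0 : ℝ) < 1 + ν + n := by positivity
  have h6 : (0 : ℝ) < (n : ℝ) + 1 := by positivity
  unfold Mb
  rw [e1, e2, e3]
  field_simp
  ring

lemma summable_Mb {A B ν c : ℝ} (hA : 0 < A) (hB : 0 < B) (hν : 0 < ν) (hc : 0 < c) :
    Summable (Mb A B ν c) := by
  apply summable_of_ratio_norm_eventually_le (r := 1 / 2) (by norm_num)
  filter_upwards [eventually_ge_atTop (⌈2 * B * (c + 1)⌉₊)] with n hn
  have hn' : 2 * B * (c + 1) ≤ (n : ℝ) + 1 := by
    calc 2 * B * (c + 1) ≤ (⌈2 * B * (c + 1)⌉₊ : ℝ) := Nat.le_ceil _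
      _ ≤ (n : ℝ) := by exact_mod_cast hn
      _ ≤ (n : ℝ) + 1 := by linarith
  have hMn := Mb_pos hA hB hν hc n
  have hMn1 := Mb_pos hA hB hν hc (n + 1)
  rw [Real.norm_eq_abs, Real.norm_eq_abs, abs_of_pos hMn1, abs_of_pos hMn,
    Mb_succ hA hB hν hc n]
  have h5 : (0 : ℝ) < 1 + ν + n := by positivity
  have h6 : (0 : ℝ) < (n : ℝ) + 1 := by positivity
  have hq : B * (c + ν + n) / ((1 + ν + n) * (n + 1)) ≤ 1 / 2 := by
    rw [div_le_iff₀ (by positivity)]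
    have hstep : c + ν + (n : ℝ) ≤ (c + 1) * (1 + ν + n) := by nlinarith
    have hstep2 : B * (c + ν + n) ≤ B * ((c + 1) * (1 + ν + n)) :=
      mul_le_mul_of_nonneg_left hstep hB.le
    have hstep3 : 2 * B * (c + 1) * (1 + ν + n) ≤ ((n : ℝ) + 1) * (1 + ν + n) :=
      mul_le_mul_of_nonneg_right hn' h5.le
    nlinarith
  calc Mb A B ν c n * (B * (c + ν + n) / ((1 + ν + n) * (n + 1)))
      ≤ Mb A B ν c n * (1 / 2) := mul_le_mul_of_nonneg_left hq hMn.le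
    _ = 1 / 2 * Mb A B ν c n := by ring

/-- The main pointwise bound. -/
lemma norm_fB_le {A B ν c : ℝ} (hA : 0 < A) (hB : 0 < B) (hν : 0 < ν) (hc : 0 < c)
    (n : ℕ) (y : ℝ) :
    ‖fB A B ν n ((c : ℂ) + y * Complex.I)‖ ≤ Mb A B ν c n * (1 + y ^ 2)⁻¹ := by
  set z : ℂ := (c : ℂ) + y * Complex.I with hzdef
  have hre : z.re = c := by simp [hzdef]
  have hG3 : (0 : ℝ) < Real.Gamma (1 + ν + n) := Real.Gamma_pos_of_pos (by positivity)
  have hfac : (0 : ℝ) < (n.factorial : ℝ) := by positivity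
  have hGc : Complex.Gamma (1 + (ν : ℂ) + n) = ((Real.Gamma (1 + ν + n) : ℝ) : ℂ) := by
    rw [← Complex.Gamma_ofReal]
    push_cast
    ring_nf
  have hnorm : ‖fB A B ν n z‖ =
      B ^ n / (n.factorial * Real.Gamma (1 + ν + n)) *
        ‖Complex.Gamma (z + ν + n)‖ * ‖Complex.Gamma z‖ * A ^ c := by
    unfold fB
    rw [hGc]
    have hexp : ‖Complex.exp (z * (Real.log A : ℂ))‖ = A ^ c := by
      rw [Complex.norm_exp]
      have hrepart : (z * (Real.log A : ℂ)).re = c * Real.log A := by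
        rw [Complex.mul_re, hre]
        simp [hzdef]
      rw [hrepart, Real.rpow_def_of_pos hA, mul_comm]
    rw [norm_mul, norm_mul, norm_mul, norm_div, norm_mul, norm_pow, norm_pow,
      hexp]
    simp only [norm_mul, norm_neg, norm_one, one_pow, one_mul, Complex.norm_real,
      Real.norm_eq_abs, Complex.norm_natCast]
    rw [abs_of_pos hB, abs_of_pos hG3]
  rw [hnorm]
  have h1 : ‖Complex.Gamma (z + ν + n)‖ ≤ Real.Gamma (c + ν + n) := by
    have hrez : (z + ν + n).re = c + ν + n := by simp [hzdef]
    have := absGamma_le (z := z + ν + n) (by rw [hrez]; positivity)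
    rwa [hrez] at this
  have h2 : ‖Complex.Gamma z‖ ≤ Real.Gamma (c + 3) / (c * (1 + y ^ 2)) := by
    rw [le_div_iff₀ (by positivity)]
    exact absGamma_line hc y
  calc B ^ n / (n.factorial * Real.Gamma (1 + ν + n)) *
        ‖Complex.Gamma (z + ν + n)‖ * ‖Complex.Gamma z‖ * A ^ c
      ≤ B ^ n / (n.factorial * Real.Gamma (1 + ν + n)) *
        Real.Gamma (c + ν + n) * (Real.Gamma (c + 3) / (c * (1 + y ^ 2))) * A ^ c := by
        have hcoef : (0 : ℝ) ≤ B ^ n / (n.factorial * Real.Gamma (1 + ν + n)) := by positivity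
        have hAc : (0 : ℝ) ≤ A ^ c := by positivity
        apply mul_le_mul_of_nonneg_right _ hAc
        apply mul_le_mul (mul_le_mul_of_nonneg_left h1 hcoef) h2 (norm_nonneg _)
        positivity
    _ = Mb A B ν c n * (1 + y ^ 2)⁻¹ := by
        unfold Mb
        field_simp

lemma contGammaLine (c : ℝ) (a : ℂ) (h : 0 < c + a.re) :
    Continuous fun y : ℝ => Complex.Gamma ((c : ℂ) + y * Complex.I + a) := by
  rw [continuous_iff_continuousAt]
  intro y
  have hz : ContinuousAt (fun y : ℝ => (c : ℂ) + y * Complex.I + a) y := by fun_prop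
  refine ContinuousAt.comp ?_ hz
  apply (Complex.differentiableAt_Gamma _ fun m => ?_).continuousAt
  intro hEq
  have := congrArg Complex.re hEq
  simp only [Complex.add_re, Complex.ofReal_re, Complex.mul_re, Complex.ofReal_im,
    Complex.I_re, Complex.I_im, Complex.neg_re, Complex.natCast_re] at this
  have hm : (0 : ℝ) ≤ (m : ℝ) := Nat.cast_nonneg m
  nlinarith [this]

end auxLemmas

/-- Interchanging sum and integral for the family `f_n` on the vertical line `Re z = c`. -/
theorem sum_integral_interchange (A B ν c : ℝ) (hA : 0 < A) (hB : 0 < B)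
    (hν : 0 < ν) (hc : 0 < c) :
    (∀ y : ℝ, Summable (fun n : ℕ => fB A B ν n ((c : ℂ) + y * Complex.I))) ∧
    Integrable (fun y : ℝ => ∑' n : ℕ, fB A B ν n ((c : ℂ) + y * Complex.I)) ∧
    (∀ n : ℕ, Integrable (fun y : ℝ => fB A B ν n ((c : ℂ) + y * Complex.I))) ∧
    Summable (fun n : ℕ => ∫ y : ℝ, fB A B ν n ((c : ℂ) + y * Complex.I)) ∧
    (∫ y : ℝ, ∑' n : ℕ, fB A B ν n ((c : ℂ) + y * Complex.I)) =
      ∑' n : ℕ, ∫ y : ℝ, fB A B ν n ((c : ℂ) + y * Complex.I) := by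
  have hMb := summable_Mb hA hB hν hc
  have hMbpos := Mb_pos hA hB hν hc
  have hbound : ∀ n (y : ℝ), ‖fB A B ν n ((c : ℂ) + y * Complex.I)‖ ≤
      Mb A B ν c n * (1 + y ^ 2)⁻¹ := fun n y => norm_fB_le hA hB hν hc n y
  have hinvle : ∀ y : ℝ, (1 + y ^ 2)⁻¹ ≤ (1 : ℝ) := fun y => by
    rw [inv_le_one_iff₀]; right; nlinarith
  have hIntg : Integrable (fun y : ℝ => (1 + y ^ 2)⁻¹) := integrable_inv_one_add_sq
  -- continuity of each term
  have hcont : ∀ n : ℕ, Continuous fun y : ℝ => fB A B ν n ((c : ℂ) + y * Complex.I) := by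
    intro n
    unfold fB
    refine ((continuous_const.mul ?_).mul ?_).mul ?_
    · have := contGammaLine c ((ν : ℂ) + (n : ℂ)) (by simp; positivity)
      refine this.congr fun y => ?_
      ring_nf
    · have := contGammaLine c 0 (by simpa using hc)
      refine this.congr fun y => ?_
      rw [add_zero]
    · exact Complex.continuous_exp.comp (by fun_prop)
  -- integrability of each term
  have hint : ∀ n : ℕ, Integrable (fun y : ℝ => fB A B ν n ((c : ℂ) + y * Complex.I)) := by
    intro n
    refine (hIntg.const_mul (Mb A B ν c n)).mono' (hcont n).aestronglyMeasurable ?_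
    exact Filter.Eventually.of_forall fun y => hbound n y
  -- pointwise summability
  have hsumm : ∀ y : ℝ, Summable fun n : ℕ => fB A B ν n ((c : ℂ) + y * Complex.I) := by
    intro y
    exact Summable.of_norm_bounded
      (hMb.mul_right _) (fun n => hbound n y)
  -- continuity of the sum
  have hcontsum : Continuous fun y : ℝ => ∑' n : ℕ, fB A B ν n ((c : ℂ) + y * Complex.I) := by
    refine continuous_tsum hcont hMb fun n y => ?_
    calc ‖fB A B ν n ((c : ℂ) + y * Complex.I)‖ ≤ Mb A B ν c n * (1 + y ^ 2)⁻¹ := hbound n y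
      _ ≤ Mb A B ν c n * 1 := mul_le_mul_of_nonneg_left (hinvle y) (hMbpos n).le
      _ = Mb A B ν c n := mul_one _
  -- integrability of the sum
  have hintsum : Integrable (fun y : ℝ => ∑' n : ℕ, fB A B ν n ((c : ℂ) + y * Complex.I)) := by
    refine (hIntg.const_mul (∑' n, Mb A B ν c n)).mono' hcontsum.aestronglyMeasurable ?_
    refine Filter.Eventually.of_forall fun y => ?_
    have hns : Summable fun n : ℕ => ‖fB A B ν n ((c : ℂ) + y * Complex.I)‖ :=
      Summable.of_nonneg_of_le (fun n => norm_nonneg _) (fun n => hbound n y)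
        (hMb.mul_right _)
    calc ‖∑' n : ℕ, fB A B ν n ((c : ℂ) + y * Complex.I)‖
        ≤ ∑' n : ℕ, ‖fB A B ν n ((c : ℂ) + y * Complex.I)‖ :=
          norm_tsum_le_tsum_norm hns
      _ ≤ ∑' n : ℕ, Mb A B ν c n * (1 + y ^ 2)⁻¹ := by
          refine Summable.tsum_le_tsum (fun n => hbound n y) ?_ (hMb.mul_right _)
          exact Summable.of_nonneg_of_le (fun n => norm_nonneg _) (fun n => hbound n y)
            (hMb.mul_right _)
      _ = (∑' n : ℕ, Mb A B ν c n) * (1 + y ^ 2)⁻¹ := tsum_mul_right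
  -- summability of the integrals of norms
  have hsumnorm : Summable fun n : ℕ => ∫ y : ℝ, ‖fB A B ν n ((c : ℂ) + y * Complex.I)‖ := by
    refine Summable.of_nonneg_of_le (fun n => integral_nonneg fun y => norm_nonneg _)
      (fun n => ?_) (hMb.mul_right (∫ y : ℝ, (1 + y ^ 2)⁻¹))
    calc (∫ y : ℝ, ‖fB A B ν n ((c : ℂ) + y * Complex.I)‖)
        ≤ ∫ y : ℝ, Mb A B ν c n * (1 + y ^ 2)⁻¹ :=
          integral_mono (hint n).norm (hIntg.const_mul _) (fun y => hbound n y)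
      _ = Mb A B ν c n * ∫ y : ℝ, (1 + y ^ 2)⁻¹ := integral_const_mul _ _
  -- summability of the integrals
  have hsumint : Summable fun n : ℕ => ∫ y : ℝ, fB A B ν n ((c : ℂ) + y * Complex.I) := by
    refine Summable.of_norm_bounded hsumnorm fun n => ?_
    exact norm_integral_le_integral_norm _
  exact ⟨hsumm, hintsum, hint, hsumint,
    (MeasureTheory.integral_tsum_of_summable_integral_norm hint hsumnorm).symm⟩
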